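/- Let V be a ℂ-vector space with a symmetric bilinear form, and let V⁰ ⊆ V be a subspace on which the restricted form is identically zero. Then every element x = Σᵢ vᵢ∧wᵢ of Λ²V⁰ ⊆ so(V), viewed as an endomorphism of V via (a∧b)·u = ⟨u,b⟩a − ⟨u,a⟩b, satisfies x² = 0 as an endomorphism of V. If instead the form restricted to V⁰ has rank 1, then x³ = 0 for every x ∈ Λ²V⁰. -/
import Mathlib


/-- An element `x = Σᵢ vᵢ∧wᵢ` of `Λ²V⁰`, acting on `V` by `(a∧b)·u = ⟨u,b⟩a − ⟨u,a⟩b`,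
squares to zero if the form restricted to `V⁰` is identically zero, and cubes to zero
if the form restricted to `V⁰` has rank one. -/
theorem stmt7 (V : Type*) [AddCommGroup V] [Module ℂ V]
    (B : V →ₗ[ℂ] V →ₗ[ℂ] ℂ) (hsymm : ∀ a b : V, B a b = B b a)
    (V0 : Submodule ℂ V)
    (φ : V → V → V →ₗ[ℂ] V)
    (hφ : ∀ a b u : V, φ a b u = B u b • a - B u a • b)
    (n : ℕ) (v w : Fin n → V) (hv : ∀ i, v i ∈ V0) (hw : ∀ i, w i ∈ V0)
    (f : V →ₗ[ℂ] V) (hf : f = ∑ i, φ (v i) (w i)) :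
    ((∀ x ∈ V0, ∀ y ∈ V0, B x y = 0) → f ∘ₗ f = 0) ∧
    (∀ ℓ : V →ₗ[ℂ] ℂ, (∀ x ∈ V0, ∀ y ∈ V0, B x y = ℓ x * ℓ y) →
      (∃ x ∈ V0, ℓ x ≠ 0) → f ∘ₗ (f ∘ₗ f) = 0) := by
  have hg : ∀ u, f u = ∑ i, (B u (w i) • v i - B u (v i) • w i) := by
    intro u
    rw [hf]
    simp only [LinearMap.sum_apply]
    exact Finset.sum_congr rfl fun i _ => hφ _ _ _
  have hmem : ∀ u, f u ∈ V0 := by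
    intro u
    rw [hg]
    exact Submodule.sum_mem _ fun i _ =>
      Submodule.sub_mem _ (Submodule.smul_mem _ _ (hv i)) (Submodule.smul_mem _ _ (hw i))
  constructor
  · intro h0
    ext u
    simp only [LinearMap.comp_apply, LinearMap.zero_apply]
    rw [hg]
    apply Finset.sum_eq_zero
    intro i _
    rw [h0 _ (hmem u) _ (hw i), h0 _ (hmem u) _ (hv i)]
    simp
  · intro ℓ hℓ _
    set z := ∑ i, (ℓ (w i) • v i - ℓ (v i) • w i) with hz
    have hzmem : z ∈ V0 := Submodule.sum_mem _ fun i _ =>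
      Submodule.sub_mem _ (Submodule.smul_mem _ _ (hv i)) (Submodule.smul_mem _ _ (hw i))
    have hℓz : ℓ z = 0 := by
      rw [hz, map_sum]
      apply Finset.sum_eq_zero
      intro i _
      simp [mul_comm]
    have hfx : ∀ x ∈ V0, f x = ℓ x • z := by
      intro x hx
      rw [hg, hz, Finset.smul_sum]
      apply Finset.sum_congr rfl
      intro i _
      rw [hℓ _ hx _ (hw i), hℓ _ hx _ (hv i), smul_sub, smul_smul, smul_smul]
    ext u
    simp only [LinearMap.comp_apply, LinearMap.zero_apply]
    rw [hfx _ (hmem u), map_smul, hfx _ hzmem, hℓz, zero_smul, smul_zero]
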